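/- For the uniform multi-touch attribution rule and the impression adjacency relation with post-attribution contribution bound enforcement, the configuration is invalid: for every constant C₀ > 0 there exist adjacent datasets D and D' (differing by one impression) such that with contribution bound r = 1, the resulting attributed datasets satisfy ‖attr(D) - attr(D')‖₁ > C₀. Concretely, for any p ≥ 2 there exist adjacent datasets for which ‖attr(D) - attr(D')‖₁ ≥ 2 ln(p/2). -/

import Mathlib

/-! Framework for differentially private ad conversion measurement
(Delaney et al., "Differentially Private Ad Conversion Measurement"). -/

structure Impression where
  time : ℕ
  user : ℕ
  pub : ℕ
  adv : ℕ
  id : ℕ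
deriving DecidableEq

structure Conversion where
  time : ℕ
  user : ℕ
  adv : ℕ
  id : ℕ
deriving DecidableEq

structure Dataset where
  imps : List Impression
  convs : List Conversion

/-- An attribution rule maps a time-ordered list of impressions and a conversion
to a list of credits (one per impression). -/
abbrev AttrRule := List Impression → Conversion → List ℝ

/-- A valid attribution rule outputs one nonnegative weight per impression, summing to 1. -/
def ValidRule (a : AttrRule) : Prop :=
  ∀ is c, is ≠ [] →
    (a is c).length = is.length ∧ (a is c).sum = 1 ∧ ∀ w ∈ a is c, (0 : ℝ) ≤ w

/-- Impressions eligible for attribution of conversion `c`: those occurring earlier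
with the same user and advertiser. -/
def eligible (D : Dataset) (c : Conversion) : List Impression :=
  D.imps.filter fun i => decide (i.time < c.time ∧ i.user = c.user ∧ i.adv = c.adv)

/-- ℓ₁ distance between attributed datasets. -/
noncomputable def l1dist (w w' : (Impression × Conversion) →₀ ℝ) : ℝ :=
  (w - w').sum fun _ v => |v|

/-- Impressions and conversions are listed in time order. -/
def SortedDS (D : Dataset) : Prop :=
  D.imps.Pairwise (fun i j => i.time ≤ j.time) ∧
  D.convs.Pairwise (fun c c' => c.time ≤ c'.time)

/-- Inner loop of post-attribution contribution-bound enforcement: each weighted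
(impression, conversion) pair is kept only if the remaining bound of its scope covers
the weight, in which case the weight is deducted. -/
noncomputable def applyPairs {σ : Type} [DecidableEq σ] (s : Impression → σ) (c : Conversion) :
    List (Impression × ℝ) → (σ → ℝ) × ((Impression × Conversion) →₀ ℝ) →
      (σ → ℝ) × ((Impression × Conversion) →₀ ℝ)
  | [], st => st
  | (i, w) :: rest, st =>
      if w ≤ st.1 (s i) then
        applyPairs s c rest
          (Function.update st.1 (s i) (st.1 (s i) - w), st.2 + Finsupp.single (i, c) w)
      else
        applyPairs s c rest st

/-- Attribution with post-attribution contribution bound enforcement (Algorithm 1),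
with contribution bounding scope map `s` and contribution bound `r`. -/
noncomputable def postAttr {σ : Type} [DecidableEq σ] (a : AttrRule) (s : Impression → σ)
    (r : ℝ) (D : Dataset) : (Impression × Conversion) →₀ ℝ :=
  (D.convs.foldl
    (fun st c => applyPairs s c ((eligible D c).zip (a (eligible D c) c)) st)
    ((fun _ => r : σ → ℝ), (0 : (Impression × Conversion) →₀ ℝ))).2

/-- Attribution with pre-attribution contribution bound enforcement (Algorithm 2):
for each conversion, every scope with an eligible impression pays one unit of its bound
if available, otherwise its impressions are excluded from attribution. -/
noncomputable def preAttr {σ : Type} [DecidableEq σ] (a : AttrRule) (s : Impression → σ)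
    (r : ℝ) (D : Dataset) : (Impression × Conversion) →₀ ℝ :=
  (D.convs.foldl
    (fun (st : (σ → ℝ) × ((Impression × Conversion) →₀ ℝ)) c =>
      let el := eligible D c
      let surv := el.filter fun i => decide ((1 : ℝ) ≤ st.1 (s i))
      let scopes := (el.map s).dedup
      ((fun x => if x ∈ scopes ∧ (1 : ℝ) ≤ st.1 x then st.1 x - 1 else st.1 x : σ → ℝ),
        st.2 + ((surv.zip (a surv c)).map fun p => Finsupp.single (p.1, c) p.2).sum))
    ((fun _ => r : σ → ℝ), (0 : (Impression × Conversion) →₀ ℝ))).2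

/-- Attribution without any contribution bound enforcement. -/
noncomputable def attrNoCap (a : AttrRule) (D : Dataset) :
    (Impression × Conversion) →₀ ℝ :=
  (D.convs.map fun c =>
    (((eligible D c).zip (a (eligible D c) c)).map fun p => Finsupp.single (p.1, c) p.2).sum).sum

/-- Adjacency: `D'` results from `D` by adding a single impression (in time order). -/
def AddOneImpression (D D' : Dataset) : Prop :=
  ∃ (i0 : Impression) (l₁ l₂ : List Impression),
    D.imps = l₁ ++ l₂ ∧ D'.imps = l₁ ++ i0 :: l₂ ∧ D.convs = D'.convs

/-- Adjacency: `D` results from `D'` by removing all impressions whose scope (under `si`)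
is `v` and all conversions whose scope (under `sc`) is `v`. -/
def RemovesScope {σ : Type} [DecidableEq σ] (si : Impression → σ)
    (sc : Conversion → Option σ) (v : σ) (D D' : Dataset) : Prop :=
  D.imps = D'.imps.filter (fun i => decide (si i ≠ v)) ∧
  D.convs = D'.convs.filter (fun c => decide (sc c ≠ some v))

/-- First-touch attribution. -/
noncomputable def FTA : AttrRule := fun is _ =>
  match is with
  | [] => []
  | _ :: t => 1 :: t.map fun _ => 0

/-- Last-touch attribution. -/
noncomputable def LTA : AttrRule := fun is _ =>
  match is with
  | [] => []
  | _ :: _ => List.replicate (is.length - 1) 0 ++ [1]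

/-- Uniform multi-touch attribution. -/
noncomputable def UNI : AttrRule := fun is _ => is.map fun _ => ((is.length : ℝ))⁻¹

/-- U-shaped attribution. -/
noncomputable def USH : AttrRule := fun is _ =>
  match is with
  | [] => []
  | [_] => [1]
  | [_, _] => [0.5, 0.5]
  | _ :: _ :: _ :: _ =>
      (0.4 : ℝ) :: (List.replicate (is.length - 2) ((0.2 : ℝ) / ((is.length : ℝ) - 2)) ++ [0.4])

/-- Exponential time decay attribution with half-life `th`. -/
noncomputable def EXPR (th : ℝ) : AttrRule := fun is c =>
  let wt : Impression → ℝ := fun i => (2 : ℝ) ^ (-(((c.time : ℝ) - (i.time : ℝ)) / th))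
  is.map fun i => wt i / (is.map wt).sum


namespace A7

def Ip (p j : ℕ) : Impression := ⟨j * (p+1), 0, 0, 0, j⟩
def Cv (p k t : ℕ) : Conversion := ⟨k * (p+1) + t + 1, 0, 0, t⟩
def impsL (p : ℕ) : List Impression := (List.range p).map fun j => Ip p (j+1)
def blk (p k : ℕ) : List Conversion := (List.range k).map fun t => Cv p k t
def convsL (p : ℕ) : List Conversion := ((List.range p).map fun k => blk p (k+1)).flatten
def DD (p : ℕ) : Dataset := ⟨(impsL p).tail, convsL p⟩
def DD' (p : ℕ) : Dataset := ⟨impsL p, convsL p⟩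

lemma Ip_inj {p a b : ℕ} : Ip p a = Ip p b ↔ a = b :=
  ⟨fun h => congrArg Impression.id h, fun h => by rw [h]⟩

lemma key_eq {p k t k' t' : ℕ} :
    ((Ip p k, Cv p k t) : Impression × Conversion) = (Ip p k', Cv p k' t') ↔ k = k' ∧ t = t' := by
  constructor
  · intro h
    exact ⟨Ip_inj.mp (congrArg Prod.fst h), congrArg (fun q : Impression × Conversion => q.2.id) h⟩
  · rintro ⟨rfl, rfl⟩; rfl

lemma range_filter {k p : ℕ} (h : k ≤ p) :
    (List.range p).filter (fun j => decide (j < k)) = List.range k := by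
  induction p, h using Nat.le_induction with
  | base =>
    apply List.filter_eq_self.mpr
    intro a ha
    simpa using List.mem_range.mp ha
  | succ n hn ih =>
    rw [List.range_succ, List.filter_append, ih]
    have : ¬ n < k := by omega
    simp [this]

lemma eligible_D' {p k t : ℕ} (hk : 1 ≤ k) (hkp : k ≤ p) (ht : t < k) :
    eligible (DD' p) (Cv p k t) = (List.range k).map fun j => Ip p (j+1) := by
  show (impsL p).filter _ = _
  unfold impsL
  rw [List.filter_map]
  congr 1
  rw [List.filter_congr (q := fun j => decide (j < k)), range_filter hkp]
  intro j hj
  have hj' : j < p := List.mem_range.mp hj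
  simp only [Function.comp, Ip, Cv, decide_eq_decide]
  constructor
  · intro hh
    by_contra hjk
    have hjk' : k + 1 ≤ j + 1 := by omega
    have h1 : (k+1) * (p+1) ≤ (j+1) * (p+1) := Nat.mul_le_mul_right _ hjk'
    have h2 : (k+1) * (p+1) = k * (p+1) + (p+1) := by ring
    have h3 : t + 1 ≤ p := by omega
    omega
  · intro hjk
    refine ⟨?_, trivial, trivial⟩
    have h1 : (j+1) * (p+1) ≤ k * (p+1) := Nat.mul_le_mul_right _ (by omega)
    omega

lemma impsL_eq {p : ℕ} (hp : 1 ≤ p) :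
    impsL p = Ip p 1 :: (List.range (p-1)).map (fun j => Ip p (j+2)) := by
  obtain ⟨n, rfl⟩ : ∃ n, p = n+1 := ⟨p-1, by omega⟩
  unfold impsL
  rw [List.range_succ_eq_map]
  simp [List.map_map, Function.comp, Nat.succ_eq_add_one]

lemma eligible_D {p k t : ℕ} (hk : 1 ≤ k) (hkp : k ≤ p) (ht : t < k) :
    eligible (DD p) (Cv p k t) = (List.range (k-1)).map fun j => Ip p (j+2) := by
  have hE := eligible_D' hk hkp ht
  have hp : 1 ≤ p := le_trans hk hkp
  have himps : impsL p = Ip p 1 :: (List.range (p-1)).map (fun j => Ip p (j+2)) := impsL_eq hp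
  have hhead : (fun i : Impression => decide (i.time < (Cv p k t).time ∧ i.user = (Cv p k t).user
      ∧ i.adv = (Cv p k t).adv)) (Ip p 1) = true := by
    simp only [Ip, Cv, decide_eq_true_eq]
    refine ⟨?_, trivial, trivial⟩
    have h1 : 1 * (p+1) ≤ k * (p+1) := Nat.mul_le_mul_right _ hk
    omega
  have hE' : eligible (DD' p) (Cv p k t)
      = Ip p 1 :: eligible (DD p) (Cv p k t) := by
    show (impsL p).filter _ = Ip p 1 :: ((impsL p).tail).filter _
    rw [himps]
    simp only [List.tail_cons, List.filter_cons, hhead]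
    simp
  rw [hE] at hE'
  obtain ⟨m, rfl⟩ : ∃ m, k = m+1 := ⟨k-1, by omega⟩
  rw [List.range_succ_eq_map] at hE'
  simp only [List.map_cons, List.map_map] at hE'
  simp only [List.cons.injEq] at hE'
  rw [← hE'.2]
  simp [List.map_map, Function.comp, Nat.succ_eq_add_one]

end A7

namespace A7

abbrev St := (Impression → ℝ) × ((Impression × Conversion) →₀ ℝ)

lemma applyPairs_append (c : Conversion) (l₁ l₂ : List (Impression × ℝ)) (st : St) :
    applyPairs (fun i => i) c (l₁ ++ l₂) st
      = applyPairs (fun i => i) c l₂ (applyPairs (fun i => i) c l₁ st) := by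
  induction l₁ generalizing st with
  | nil => simp [applyPairs]
  | cons q l ih =>
    obtain ⟨i, w⟩ := q
    simp only [List.cons_append, applyPairs]
    split <;> apply ih

lemma applyPairs_skip (c : Conversion) (l : List (Impression × ℝ)) (st : St)
    (h : ∀ q ∈ l, ¬ q.2 ≤ st.1 q.1) :
    applyPairs (fun i => i) c l st = st := by
  induction l with
  | nil => simp [applyPairs]
  | cons q l ih =>
    obtain ⟨i, w⟩ := q
    simp only [applyPairs]
    rw [if_neg (h (i, w) (List.mem_cons_self))]
    exact ih fun q hq => h q (List.mem_cons_of_mem _ hq)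

lemma conv_step {p : ℕ} (n a : ℕ) (hn : 1 ≤ n) (u : ℝ) (hu : 0 < u) (c : Conversion)
    (st : St) (h0 : ∀ j, j < n - 1 → st.1 (Ip p (j+a)) = 0) :
    applyPairs (fun i => i) c ((List.range n).map fun j => (Ip p (j+a), u)) st =
      if u ≤ st.1 (Ip p (n-1+a)) then
        (Function.update st.1 (Ip p (n-1+a)) (st.1 (Ip p (n-1+a)) - u),
         st.2 + Finsupp.single (Ip p (n-1+a), c) u)
      else st := by
  obtain ⟨m, rfl⟩ : ∃ m, n = m+1 := ⟨n-1, by omega⟩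
  have hskip : applyPairs (fun i => i) c ((List.range m).map fun j => (Ip p (j+a), u)) st = st := by
    apply applyPairs_skip
    rintro q hq
    simp only [List.mem_map, List.mem_range] at hq
    obtain ⟨j, hj, rfl⟩ := hq
    simp only [h0 j (by omega)]
    exact not_le.mpr hu
  rw [List.range_succ, List.map_append, applyPairs_append, hskip]
  simp only [List.map_cons, List.map_nil, Nat.add_sub_cancel]
  by_cases hcond : u ≤ st.1 (Ip p (m+a)) <;> simp [applyPairs, hcond]

lemma blockC1 {p : ℕ} (n a : ℕ) (hn : 1 ≤ n) (u : ℝ) (hu : 0 < u)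
    (P : Conversion → List (Impression × ℝ)) :
    ∀ (cs : List Conversion) (st : St) (m : ℝ),
    (∀ c ∈ cs, P c = (List.range n).map fun j => (Ip p (j+a), u)) →
    (cs.length : ℝ) ≤ m → st.1 (Ip p (n-1+a)) = m * u →
    (∀ j, j < n - 1 → st.1 (Ip p (j+a)) = 0) →
    cs.foldl (fun st c => applyPairs (fun i => i) c (P c) st) st =
      (Function.update st.1 (Ip p (n-1+a)) ((m - cs.length) * u),
       st.2 + (cs.map fun c => Finsupp.single (Ip p (n-1+a), c) u).sum) := by
  intro cs
  induction cs with
  | nil =>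
    intro st m hP hlen hb h0
    simp only [List.foldl_nil, List.map_nil, List.sum_nil, add_zero, List.length_nil,
      Nat.cast_zero, sub_zero, ← hb, Function.update_eq_self]
  | cons c cs ih =>
    intro st m hP hlen hb h0
    have hm1 : (1 : ℝ) ≤ m := by
      simp only [List.length_cons] at hlen
      push_cast at hlen
      have h2 : (0:ℝ) ≤ cs.length := Nat.cast_nonneg _
      linarith
    simp only [List.foldl_cons]
    rw [hP c (List.mem_cons_self), conv_step n a hn u hu c st h0, if_pos]
    swap
    · rw [hb]
      nlinarith
    set x := Ip p (n-1+a) with hx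
    have hne : ∀ j, j < n - 1 → Ip p (j+a) ≠ x := by
      intro j hj h
      have := Ip_inj.mp h
      omega
    rw [ih _ (m - 1) (fun c hc => hP c (List.mem_cons_of_mem _ hc))
      (by simp only [List.length_cons] at hlen; push_cast at hlen ⊢; linarith)
      (by show Function.update st.1 x (st.1 x - u) x = (m-1)*u
          rw [Function.update_self, hb]; ring)
      (by intro j hj
          show Function.update st.1 x (st.1 x - u) (Ip p (j+a)) = 0
          rw [Function.update_of_ne (hne j hj)]; exact h0 j hj)]
    show (Function.update (Function.update st.1 x (st.1 x - u)) x _, _) = _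
    rw [Function.update_idem]
    simp only [List.length_cons, List.map_cons, List.sum_cons, Prod.mk.injEq]
    refine ⟨?_, ?_⟩
    · congr 1
      push_cast
      ring
    · rw [add_assoc]

end A7

namespace A7

noncomputable def Bud (p a k : ℕ) : Impression → ℝ :=
  fun i => if a ≤ i.id ∧ i.id ≤ k ∧ i = Ip p i.id then 0 else 1

lemma Bud_Ip {p a k j : ℕ} (h1 : a ≤ j) (h2 : j ≤ k) : Bud p a k (Ip p j) = 0 := by
  unfold Bud
  exact if_pos (show a ≤ (Ip p j).id ∧ (Ip p j).id ≤ k ∧ Ip p j = Ip p (Ip p j).id from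
    ⟨h1, h2, rfl⟩)

lemma Bud_Ip_big {p a k j : ℕ} (h2 : k < j) : Bud p a k (Ip p j) = 1 := by
  simp only [Bud]
  rw [if_neg]
  rintro ⟨-, h, -⟩
  exact absurd h (by simpa [Ip] using by omega)

lemma Bud_update {p a k : ℕ} (h : a ≤ k + 1) :
    Function.update (Bud p a k) (Ip p (k+1)) 0 = Bud p a (k+1) := by
  funext i
  by_cases hi : i = Ip p (k+1)
  · subst hi
    rw [Function.update_self, Bud_Ip h (le_refl _)]
  · rw [Function.update_of_ne hi]
    simp only [Bud]
    by_cases h1 : a ≤ i.id ∧ i.id ≤ k ∧ i = Ip p i.id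
    · rw [if_pos h1, if_pos ⟨h1.1, by omega, h1.2.2⟩]
    · rw [if_neg h1, if_neg]
      rintro ⟨ha, hk1, heq⟩
      by_cases hik : i.id = k + 1
      · exact hi (by rw [heq, hik])
      · exact h1 ⟨ha, by omega, heq⟩

lemma list_sum_range {M : Type*} [AddCommMonoid M] (f : ℕ → M) (n : ℕ) :
    ((List.range n).map f).sum = ∑ i ∈ Finset.range n, f i := by
  induction n with
  | zero => simp
  | succ n ih => rw [List.range_succ, List.map_append, List.sum_append, Finset.sum_range_succ, ih]; simp

noncomputable def Wd' (p : ℕ) : (Impression × Conversion) →₀ ℝ :=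
  ∑ k ∈ Finset.range p, ∑ t ∈ Finset.range (k+1),
    Finsupp.single (Ip p (k+1), Cv p (k+1) t) (((k:ℝ)+1))⁻¹

noncomputable def Wd (p : ℕ) : (Impression × Conversion) →₀ ℝ :=
  ∑ k ∈ Finset.range p, ∑ t ∈ Finset.range k,
    Finsupp.single (Ip p (k+1), Cv p (k+1) t) ((k:ℝ))⁻¹

lemma pairs_D' {p k : ℕ} (hk : k < p) (c : Conversion) (hc : c ∈ blk p (k+1)) :
    (eligible (DD' p) c).zip (UNI (eligible (DD' p) c) c)
      = (List.range (k+1)).map fun j => (Ip p (j+1), ((k:ℝ)+1)⁻¹) := by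
  simp only [blk, List.mem_map, List.mem_range] at hc
  obtain ⟨t, ht, rfl⟩ := hc
  rw [eligible_D' (by omega) (by omega) ht]
  show (List.map _ _).zip (List.map _ _) = _
  rw [List.length_map, List.length_range, List.map_map, List.zip_map']
  push_cast
  rfl

lemma fold_blocks_D' {p : ℕ} : ∀ k, k ≤ p →
    List.foldl (fun st c => applyPairs (fun i => i) c
        ((eligible (DD' p) c).zip (UNI (eligible (DD' p) c) c)) st)
      ((fun _ => (1:ℝ)), (0 : (Impression × Conversion) →₀ ℝ))
      (((List.range k).map fun k' => blk p (k'+1)).flatten)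
      = (Bud p 1 k, ∑ k' ∈ Finset.range k, ∑ t ∈ Finset.range (k'+1),
          Finsupp.single (Ip p (k'+1), Cv p (k'+1) t) (((k':ℝ)+1))⁻¹) := by
  intro k
  induction k with
  | zero =>
    intro _
    simp only [List.range_zero, List.map_nil, List.flatten_nil, List.foldl_nil,
      Finset.range_zero, Finset.sum_empty]
    refine Prod.ext ?_ rfl
    funext i
    simp only [Bud]
    rw [if_neg]
    omega
  | succ k ih =>
    intro hk1
    rw [List.range_succ, List.map_append, List.flatten_append, List.foldl_append,
      ih (by omega)]
    simp only [List.map_cons, List.map_nil, List.flatten_cons, List.flatten_nil,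
      List.append_nil]
    have hlen : (blk p (k+1)).length = k + 1 := by
      simp [blk]
    rw [blockC1 (p := p) (k+1) 1 (by omega) (((k:ℝ)+1))⁻¹
        (by positivity)
        (fun c => (eligible (DD' p) c).zip (UNI (eligible (DD' p) c) c))
        (blk p (k+1)) _ ((k:ℝ)+1)
        (fun c hc => pairs_D' (by omega) c hc)
        (by rw [hlen]; push_cast; exact le_refl _)
        (by show Bud p 1 k (Ip p (k+1-1+1)) = _
            simp only [Nat.add_sub_cancel]
            rw [Bud_Ip_big (by omega), mul_inv_cancel₀ (by positivity)])
        (by intro j hj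
            simp only [Nat.add_sub_cancel] at hj
            show Bud p 1 k (Ip p (j+1)) = 0
            exact Bud_Ip (by omega) (by omega))]
    simp only [Nat.add_sub_cancel, hlen]
    refine Prod.ext ?_ ?_
    · show Function.update _ _ _ = _
      rw [show (((k:ℝ)+1) - ((k+1:ℕ):ℝ)) * (((k:ℝ)+1))⁻¹ = 0 by push_cast; ring,
        Bud_update (by omega)]
    · show _ + _ = _
      rw [Finset.sum_range_succ]
      congr 1
      simp only [blk, List.map_map]
      rw [list_sum_range]
      rfl

end A7

namespace A7

lemma postAttr_D' (p : ℕ) : postAttr UNI (fun i => i) 1 (DD' p) = Wd' p := by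
  unfold postAttr
  have hc : (DD' p).convs = ((List.range p).map fun k => blk p (k+1)).flatten := rfl
  rw [hc, fold_blocks_D' p (le_refl p)]
  rfl

lemma pairs_D {p k : ℕ} (hk1 : 1 ≤ k) (hk : k < p) (c : Conversion) (hc : c ∈ blk p (k+1)) :
    (eligible (DD p) c).zip (UNI (eligible (DD p) c) c)
      = (List.range k).map fun j => (Ip p (j+2), ((k:ℝ))⁻¹) := by
  simp only [blk, List.mem_map, List.mem_range] at hc
  obtain ⟨t, ht, rfl⟩ := hc
  rw [eligible_D (by omega) (by omega) ht]
  simp only [Nat.add_sub_cancel]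
  show (List.map _ _).zip (List.map _ _) = _
  rw [List.length_map, List.length_range, List.map_map, List.zip_map']
  rfl

lemma fold_blocks_D {p : ℕ} : ∀ k, k ≤ p →
    List.foldl (fun st c => applyPairs (fun i => i) c
        ((eligible (DD p) c).zip (UNI (eligible (DD p) c) c)) st)
      ((fun _ => (1:ℝ)), (0 : (Impression × Conversion) →₀ ℝ))
      (((List.range k).map fun k' => blk p (k'+1)).flatten)
      = (Bud p 2 k, ∑ k' ∈ Finset.range k, ∑ t ∈ Finset.range k',
          Finsupp.single (Ip p (k'+1), Cv p (k'+1) t) ((k':ℝ))⁻¹) := by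
  intro k
  induction k with
  | zero =>
    intro _
    simp only [List.range_zero, List.map_nil, List.flatten_nil, List.foldl_nil,
      Finset.range_zero, Finset.sum_empty]
    refine Prod.ext ?_ rfl
    funext i
    simp only [Bud]
    rw [if_neg]
    omega
  | succ k ih =>
    intro hk1
    rw [List.range_succ, List.map_append, List.flatten_append, List.foldl_append,
      ih (by omega)]
    simp only [List.map_cons, List.map_nil, List.flatten_cons, List.flatten_nil,
      List.append_nil]
    rcases Nat.eq_zero_or_pos k with rfl | hkpos
    · -- block 1: single conversion with empty eligible list
      have hblk : blk p 1 = [Cv p 1 0] := rfl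
      have hel : eligible (DD p) (Cv p 1 0) = [] := by
        have := eligible_D (p := p) (k := 1) (t := 0) (by omega) (by omega) (by omega)
        simpa using this
      rw [hblk]
      simp only [List.foldl_cons, List.foldl_nil, hel, List.zip_nil_left]
      show (Bud p 2 0, (0:(Impression × Conversion) →₀ ℝ)) = _
      refine Prod.ext ?_ ?_
      · show Bud p 2 0 = Bud p 2 1
        funext i
        simp only [Bud]
        by_cases h : 2 ≤ i.id ∧ i.id ≤ 0 ∧ i = Ip p i.id
        · omega
        · rw [if_neg h, if_neg]
          rintro ⟨h1, h2, h3⟩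
          exact h ⟨h1, by omega, h3⟩
      · simp
    · -- block k+1, k ≥ 1
      have hsplit : blk p (k+1) = ((List.range k).map fun t => Cv p (k+1) t) ++ [Cv p (k+1) k] := by
        rw [blk, List.range_succ, List.map_append]
        rfl
      rw [hsplit, List.foldl_append]
      have hidx : k - 1 + 2 = k + 1 := by omega
      have hu : (0:ℝ) < ((k:ℝ))⁻¹ := by positivity
      rw [blockC1 (p := p) k 2 (by omega) ((k:ℝ))⁻¹ hu
          (fun c => (eligible (DD p) c).zip (UNI (eligible (DD p) c) c))
          ((List.range k).map fun t => Cv p (k+1) t) _ ((k:ℝ))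
          (by intro c hc
              apply pairs_D hkpos (by omega)
              simp only [blk, List.mem_map, List.mem_range] at hc ⊢
              obtain ⟨t, ht, rfl⟩ := hc
              exact ⟨t, by omega, rfl⟩)
          (by rw [List.length_map, List.length_range])
          (by show Bud p 2 k (Ip p (k-1+2)) = _
              rw [hidx, Bud_Ip_big (by omega), mul_inv_cancel₀ (by positivity)])
          (by intro j hj
              show Bud p 2 k (Ip p (j+2)) = 0
              exact Bud_Ip (by omega) (by omega))]
      simp only [List.foldl_cons, List.foldl_nil, List.length_map, List.length_range, hidx]
      rw [pairs_D hkpos (by omega) (Cv p (k+1) k)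
          (by simp only [blk, List.mem_map, List.mem_range]; exact ⟨k, by omega, rfl⟩)]
      rw [conv_step k 2 (by omega) ((k:ℝ))⁻¹ hu _ _
          (by intro j hj
              show Function.update (Bud p 2 k) (Ip p (k+1)) _ (Ip p (j+2)) = 0
              rw [Function.update_of_ne (by intro h; have := Ip_inj.mp h; omega)]
              exact Bud_Ip (by omega) (by omega))]
      rw [if_neg]
      swap
      · show ¬ ((k:ℝ))⁻¹ ≤ Function.update (Bud p 2 k) (Ip p (k+1)) (((k:ℝ) - (k:ℕ)) * ((k:ℝ))⁻¹) (Ip p (k-1+2))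
        rw [hidx, Function.update_self]
        push_cast
        rw [sub_self, zero_mul]
        exact not_le.mpr hu
      refine Prod.ext ?_ ?_
      · show Function.update (Bud p 2 k) (Ip p (k+1)) _ = Bud p 2 (k+1)
        rw [show ((k:ℝ) - ((k:ℕ):ℝ)) * ((k:ℝ))⁻¹ = 0 by push_cast; ring]
        exact Bud_update (by omega)
      · show _ + _ = _
        rw [Finset.sum_range_succ]
        congr 1
        simp only [List.map_map]
        rw [list_sum_range]
        rfl

lemma postAttr_D (p : ℕ) : postAttr UNI (fun i => i) 1 (DD p) = Wd p := by
  unfold postAttr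
  have hc : (DD p).convs = ((List.range p).map fun k => blk p (k+1)).flatten := rfl
  rw [hc, fold_blocks_D p (le_refl p)]
  rfl

end A7

namespace A7

lemma Wd'_apply {p k t : ℕ} (hk : k < p) (ht : t < k+1) :
    Wd' p (Ip p (k+1), Cv p (k+1) t) = ((k:ℝ)+1)⁻¹ := by
  rw [Wd', Finsupp.finset_sum_apply, Finset.sum_eq_single k]
  · rw [Finsupp.finset_sum_apply, Finset.sum_eq_single t]
    · rw [Finsupp.single_apply, if_pos rfl]
    · intro t' _ hne
      rw [Finsupp.single_apply, if_neg]
      intro h; exact hne (key_eq.mp h).2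
    · intro h; exact absurd (Finset.mem_range.mpr ht) h
  · intro k' _ hne
    rw [Finsupp.finset_sum_apply]
    apply Finset.sum_eq_zero
    intro t' _
    rw [Finsupp.single_apply, if_neg]
    intro h
    exact hne (by have := (key_eq.mp h).1; omega)
  · intro h; exact absurd (Finset.mem_range.mpr hk) h

lemma Wd_apply_lt {p k t : ℕ} (hk : k < p) (ht : t < k) :
    Wd p (Ip p (k+1), Cv p (k+1) t) = ((k:ℝ))⁻¹ := by
  rw [Wd, Finsupp.finset_sum_apply, Finset.sum_eq_single k]
  · rw [Finsupp.finset_sum_apply, Finset.sum_eq_single t]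
    · rw [Finsupp.single_apply, if_pos rfl]
    · intro t' _ hne
      rw [Finsupp.single_apply, if_neg]
      intro h; exact hne (key_eq.mp h).2
    · intro h; exact absurd (Finset.mem_range.mpr ht) h
  · intro k' _ hne
    rw [Finsupp.finset_sum_apply]
    apply Finset.sum_eq_zero
    intro t' _
    rw [Finsupp.single_apply, if_neg]
    intro h
    exact hne (by have := (key_eq.mp h).1; omega)
  · intro h; exact absurd (Finset.mem_range.mpr hk) h

lemma Wd_apply_ge {p k t : ℕ} (ht : k ≤ t) :
    Wd p (Ip p (k+1), Cv p (k+1) t) = 0 := by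
  rw [Wd, Finsupp.finset_sum_apply]
  apply Finset.sum_eq_zero
  intro k' _
  rw [Finsupp.finset_sum_apply]
  apply Finset.sum_eq_zero
  intro t' ht'
  rw [Finsupp.single_apply, if_neg]
  intro h
  obtain ⟨h1, h2⟩ := key_eq.mp h
  have := Finset.mem_range.mp ht'
  omega

lemma abs_sum_le (F : (Impression × Conversion) →₀ ℝ) (S : Finset (Impression × Conversion)) :
    ∑ x ∈ S, |F x| ≤ F.sum fun _ v => |v| := by
  rw [Finsupp.sum]
  have h1 : ∑ x ∈ S, |F x| = ∑ x ∈ S ∩ F.support, |F x| := by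
    refine (Finset.sum_subset Finset.inter_subset_left ?_).symm
    intro x _ hx
    have : F x = 0 := by
      by_contra hne
      exact hx (Finset.mem_inter.mpr ⟨‹x ∈ S›, Finsupp.mem_support_iff.mpr hne⟩)
    rw [this, abs_zero]
  rw [h1]
  exact Finset.sum_le_sum_of_subset_of_nonneg Finset.inter_subset_right
    (fun i _ _ => abs_nonneg _)

lemma log_bound (p : ℕ) (hp : 2 ≤ p) :
    2 * Real.log ((p:ℝ)/2) ≤ ∑ k ∈ Finset.range (p-1), 2 * ((k:ℝ)+2)⁻¹ := by
  have hp0 : (0:ℝ) < p := by positivity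
  have h1 : Real.log ((p:ℝ)/2) = Real.log p - Real.log 2 :=
    Real.log_div (by positivity) two_ne_zero
  have tele : ∑ k ∈ Finset.range (p-2),
      (Real.log ((k:ℝ)+3) - Real.log ((k:ℝ)+2)) = Real.log p - Real.log 2 := by
    have h := Finset.sum_range_sub (fun k : ℕ => Real.log ((k:ℝ)+2)) (p-2)
    rw [Nat.cast_sub hp] at h
    norm_num at h
    rw [Finset.sum_sub_distrib,
      show ∑ x ∈ Finset.range (p-2), Real.log ((x:ℝ)+3)
          = ∑ x ∈ Finset.range (p-2), Real.log ((x:ℝ)+1+2) from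
        Finset.sum_congr rfl (fun x _ => by ring_nf)]
    exact h
  have hterm : ∀ k : ℕ, Real.log ((k:ℝ)+3) - Real.log ((k:ℝ)+2) ≤ ((k:ℝ)+2)⁻¹ := by
    intro k
    have hk2 : (0:ℝ) < (k:ℝ)+2 := by positivity
    have hk3 : (0:ℝ) < (k:ℝ)+3 := by positivity
    rw [← Real.log_div (by positivity) (by positivity)]
    have := Real.log_le_sub_one_of_pos (x := ((k:ℝ)+3)/((k:ℝ)+2)) (by positivity)
    calc Real.log (((k:ℝ)+3)/((k:ℝ)+2))
        ≤ ((k:ℝ)+3)/((k:ℝ)+2) - 1 := this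
      _ = ((k:ℝ)+2)⁻¹ := by field_simp; norm_num
  have h2 : Real.log p - Real.log 2 ≤ ∑ k ∈ Finset.range (p-2), ((k:ℝ)+2)⁻¹ := by
    rw [← tele]
    exact Finset.sum_le_sum fun k _ => hterm k
  have h3 : ∑ k ∈ Finset.range (p-2), ((k:ℝ)+2)⁻¹ ≤ ∑ k ∈ Finset.range (p-1), ((k:ℝ)+2)⁻¹ := by
    apply Finset.sum_le_sum_of_subset_of_nonneg
    · exact Finset.range_subset_range.mpr (by omega)
    · intro i _ _; positivity
  rw [h1]
  calc 2 * (Real.log p - Real.log 2) ≤ 2 * ∑ k ∈ Finset.range (p-1), ((k:ℝ)+2)⁻¹ := by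
        apply mul_le_mul_of_nonneg_left (le_trans h2 h3) (by norm_num)
    _ = ∑ k ∈ Finset.range (p-1), 2 * ((k:ℝ)+2)⁻¹ := by rw [Finset.mul_sum]

lemma main2 (p : ℕ) (hp : 2 ≤ p) :
    2 * Real.log ((p:ℝ)/2) ≤
      l1dist (postAttr UNI (fun i => i) 1 (DD p)) (postAttr UNI (fun i => i) 1 (DD' p)) := by
  rw [postAttr_D, postAttr_D', l1dist]
  set F := Wd p - Wd' p with hF
  -- value of |F| at the keys
  have hval : ∀ k < p, ∀ t < k + 1,
      |F (Ip p (k+1), Cv p (k+1) t)| =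
        (if t < k then ((k:ℝ))⁻¹ - ((k:ℝ)+1)⁻¹ else ((k:ℝ)+1)⁻¹) := by
    intro k hk t ht
    rw [hF, Finsupp.sub_apply]
    by_cases htk : t < k
    · rw [Wd_apply_lt hk htk, Wd'_apply hk ht, if_pos htk, abs_of_nonneg]
      have h1 : ((k:ℝ)+1)⁻¹ ≤ ((k:ℝ))⁻¹ := by
        have hk0 : (0:ℝ) < (k:ℝ) := by
          have : 1 ≤ k := by omega
          exact_mod_cast this
        exact inv_anti₀ hk0 (by linarith)
      linarith
    · rw [Wd_apply_ge (by omega), Wd'_apply hk ht, if_neg htk, zero_sub, abs_neg,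
        abs_of_nonneg (by positivity)]
  -- the chosen key set
  set S : Finset (Impression × Conversion) :=
    ((Finset.range p).sigma fun k => Finset.range (k+1)).image
      (fun q => (Ip p (q.1+1), Cv p (q.1+1) q.2)) with hS
  have hsum : ∑ x ∈ S, |F x| = ∑ k ∈ Finset.range p, ∑ t ∈ Finset.range (k+1),
      |F (Ip p (k+1), Cv p (k+1) t)| := by
    rw [hS, Finset.sum_image, Finset.sum_sigma]
    intro x _ y _ h
    obtain ⟨h1, h2⟩ := key_eq.mp h
    exact Sigma.ext (by omega) (by simpa using h2)
  have hinner : ∀ k < p, ∑ t ∈ Finset.range (k+1), |F (Ip p (k+1), Cv p (k+1) t)| =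
      (k:ℝ) * (((k:ℝ))⁻¹ - ((k:ℝ)+1)⁻¹) + ((k:ℝ)+1)⁻¹ := by
    intro k hk
    rw [Finset.sum_range_succ, hval k hk k (by omega), if_neg (by omega)]
    congr 1
    rw [Finset.sum_congr rfl (fun t ht => by
      rw [hval k hk t (by have := Finset.mem_range.mp ht; omega),
        if_pos (Finset.mem_range.mp ht)])]
    rw [Finset.sum_const, nsmul_eq_mul, Finset.card_range]
  have hlow : ∀ k < p, (if k = 0 then (0:ℝ) else 2 * ((k:ℝ)+1)⁻¹) ≤
      (k:ℝ) * (((k:ℝ))⁻¹ - ((k:ℝ)+1)⁻¹) + ((k:ℝ)+1)⁻¹ := by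
    intro k _
    by_cases hk0 : k = 0
    · subst hk0; norm_num
    · rw [if_neg hk0]
      have hk1 : (1:ℝ) ≤ (k:ℝ) := by exact_mod_cast Nat.one_le_cast.mpr (by omega)
      have hkpos : (0:ℝ) < (k:ℝ) := by linarith
      have : (k:ℝ) * (((k:ℝ))⁻¹ - ((k:ℝ)+1)⁻¹) + ((k:ℝ)+1)⁻¹ = 2 * ((k:ℝ)+1)⁻¹ := by
        field_simp
        ring
      rw [this]
  calc 2 * Real.log ((p:ℝ)/2)
      ≤ ∑ k ∈ Finset.range (p-1), 2 * ((k:ℝ)+2)⁻¹ := log_bound p hp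
    _ = ∑ k ∈ Finset.range p, (if k = 0 then (0:ℝ) else 2 * ((k:ℝ)+1)⁻¹) := by
        obtain ⟨n, rfl⟩ : ∃ n, p = n + 1 := ⟨p-1, by omega⟩
        rw [Finset.sum_range_succ' (fun k => if k = 0 then (0:ℝ) else 2 * ((k:ℝ)+1)⁻¹) n]
        simp only [Nat.add_sub_cancel, Nat.succ_ne_zero, if_false, if_true, if_pos rfl, add_zero]
        refine Finset.sum_congr rfl fun k _ => ?_
        push_cast
        ring_nf
    _ ≤ ∑ k ∈ Finset.range p, ((k:ℝ) * (((k:ℝ))⁻¹ - ((k:ℝ)+1)⁻¹) + ((k:ℝ)+1)⁻¹) :=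
        Finset.sum_le_sum fun k hk => hlow k (Finset.mem_range.mp hk)
    _ = ∑ x ∈ S, |F x| := by
        rw [hsum]
        exact (Finset.sum_congr rfl fun k hk => hinner k (Finset.mem_range.mp hk)).symm
    _ ≤ F.sum fun _ v => |v| := abs_sum_le F S

lemma addOne (p : ℕ) (hp : 1 ≤ p) : AddOneImpression (DD p) (DD' p) := by
  refine ⟨Ip p 1, [], (impsL p).tail, (List.nil_append _).symm, ?_, rfl⟩
  show impsL p = [] ++ Ip p 1 :: (impsL p).tail
  rw [impsL_eq hp]
  simp

lemma sorted (p : ℕ) : SortedDS (DD' p) := by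
  constructor
  · show List.Pairwise _ (impsL p)
    apply List.pairwise_map.mpr
    apply (List.pairwise_lt_range (n := p)).imp
    intro a b hab
    show (a+1) * (p+1) ≤ (b+1) * (p+1)
    exact Nat.mul_le_mul_right _ (by omega)
  · show List.Pairwise _ (((List.range p).map fun k => blk p (k+1)).flatten)
    apply List.pairwise_flatten.mpr
    constructor
    · intro l hl
      simp only [List.mem_map, List.mem_range] at hl
      obtain ⟨k, hk, rfl⟩ := hl
      apply List.pairwise_map.mpr
      apply (List.pairwise_lt_range (n := _)).imp
      intro a b hab
      show (k+1) * (p+1) + a + 1 ≤ (k+1) * (p+1) + b + 1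
      exact Nat.add_le_add (Nat.add_le_add_left (by omega) _) (le_refl 1)
    · apply List.pairwise_map.mpr
      refine List.Pairwise.imp_of_mem ?_ (List.pairwise_lt_range (n := p))
      intro a b ha hb hab
      intro x hx y hy
      simp only [blk, List.mem_map, List.mem_range] at hx hy
      obtain ⟨t, ht, rfl⟩ := hx
      obtain ⟨t', ht', rfl⟩ := hy
      show (a+1) * (p+1) + t + 1 ≤ (b+1) * (p+1) + t' + 1
      have hbp : b < p := List.mem_range.mp hb
      have h1 : (a+1) * (p+1) + t + 1 ≤ (a+2) * (p+1) := by
        have : t + 1 ≤ p + 1 := by omega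
        have h2 : (a+2) * (p+1) = (a+1) * (p+1) + (p+1) := by ring
        omega
      have h2 : (a+2) * (p+1) ≤ (b+1) * (p+1) := Nat.mul_le_mul_right _ (by omega)
      omega

end A7

/-- Theorem A.7: for uniform multi-touch attribution, the impression adjacency relation
with post-attribution enforcement is invalid: with bound `r = 1`, the ℓ₁-distance between
the attributed datasets of adjacent datasets exceeds any constant `C₀`; concretely, for
every `p ≥ 2` there are adjacent datasets at distance at least `2 ln(p/2)`. -/
theorem post_attr_impression_uni_invalid :
    (∀ C₀ : ℝ, 0 < C₀ → ∃ D D' : Dataset, AddOneImpression D D' ∧ SortedDS D' ∧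
      C₀ < l1dist (postAttr UNI (fun i => i) 1 D) (postAttr UNI (fun i => i) 1 D')) ∧
    (∀ p : ℕ, 2 ≤ p → ∃ D D' : Dataset, AddOneImpression D D' ∧ SortedDS D' ∧
      2 * Real.log ((p : ℝ) / 2) ≤
        l1dist (postAttr UNI (fun i => i) 1 D) (postAttr UNI (fun i => i) 1 D')) := by
  have main : ∀ p : ℕ, 2 ≤ p → ∃ D D' : Dataset, AddOneImpression D D' ∧ SortedDS D' ∧
      2 * Real.log ((p : ℝ) / 2) ≤
        l1dist (postAttr UNI (fun i => i) 1 D) (postAttr UNI (fun i => i) 1 D') :=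
    fun p hp => ⟨A7.DD p, A7.DD' p, A7.addOne p (by omega), A7.sorted p, A7.main2 p hp⟩
  refine ⟨?_, main⟩
  intro C₀ hC₀
  set p := max 2 (⌈2 * Real.exp (C₀/2)⌉₊ + 1) with hpdef
  have hp2 : 2 ≤ p := le_max_left _ _
  obtain ⟨D, D', h1, h2, h3⟩ := main p hp2
  refine ⟨D, D', h1, h2, lt_of_lt_of_le ?_ h3⟩
  have hp0 : (0:ℝ) < (p:ℝ) := by
    have : 0 < p := by omega
    exact_mod_cast this
  have hexp : Real.exp (C₀/2) < (p:ℝ)/2 := by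
    have h4 : 2 * Real.exp (C₀/2) ≤ (⌈2 * Real.exp (C₀/2)⌉₊ : ℝ) := Nat.le_ceil _
    have h5 : (⌈2 * Real.exp (C₀/2)⌉₊ + 1 : ℕ) ≤ p := le_max_right _ _
    have h6 : ((⌈2 * Real.exp (C₀/2)⌉₊ + 1 : ℕ) : ℝ) ≤ (p:ℝ) := Nat.cast_le.mpr h5
    push_cast at h6
    linarith
  have hlog := (Real.lt_log_iff_exp_lt (by positivity : (0:ℝ) < (p:ℝ)/2)).mpr hexp
  linarith
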